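/- Let (x_m)_{m∈ℤ} be a real sequence, w_p = x_p − x_{p−1}, c ∈ ℝ, and for a < b let H(a,b) = #{m ∈ ℤ : a < m ≤ b, w_m > c}. Fix n ≥ L ≥ |ℓ| and suppose H(−n−1, n) > 0. Then the PRSA average z_{n}(ℓ) = (Σ_{m=−n}^{n} x_{m+ℓ} 1_{w_m>c})/H(−n−1,n) satisfies z_n(ℓ) = x₀ + Σ_{p=1}^{n+ℓ} w_p · H(p−ℓ−1, n)/H(−n−1, n) − Σ_{p=−n+ℓ+1}^{0} w_p · H(−n−1, p−ℓ−1)/H(−n−1, n). -/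
import Mathlib


/-- Number of hinge points (indices `m` with `w_m > c`) in the integer
interval `(a, b]`, for the sequence `x` and threshold `c`. -/
noncomputable def hingeCount (x : ℤ → ℝ) (c : ℝ) (a b : ℤ) : ℕ :=
  ((Finset.Icc (a + 1) b).filter (fun m => c < x m - x (m - 1))).card

lemma teleNat (x : ℤ → ℝ) (a : ℤ) (k : ℕ) :
    ∑ p ∈ Finset.Icc (a + 1) (a + k), (x p - x (p - 1)) = x (a + k) - x a := by
  induction k with
  | zero => simp
  | succ k ih =>
    push_cast
    have h : (a + ((k : ℤ) + 1)) = (a + k) + 1 := by ring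
    have hins : Finset.Icc (a + 1) (a + (k : ℤ) + 1)
        = insert (a + (k : ℤ) + 1) (Finset.Icc (a + 1) (a + (k : ℤ))) := by
      ext t
      simp only [Finset.mem_insert, Finset.mem_Icc]
      omega
    rw [h, hins, Finset.sum_insert (by simp [Finset.mem_Icc]), ih]
    have h2 : a + (k : ℤ) + 1 - 1 = a + k := by ring
    rw [h2]; ring

lemma tele (x : ℤ → ℝ) (a b : ℤ) (h : a ≤ b) :
    ∑ p ∈ Finset.Icc (a + 1) b, (x p - x (p - 1)) = x b - x a := by
  obtain ⟨k, rfl⟩ : ∃ k : ℕ, b = a + k := ⟨(b - a).toNat, by omega⟩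
  exact teleNat x a k

lemma point (x : ℤ → ℝ) (n ℓ m : ℤ) (hm1 : -n ≤ m) (hm2 : m ≤ n)
    (h1 : ℓ ≤ n) (h2 : -n ≤ ℓ) :
    x (m + ℓ) = x 0
      + (∑ p ∈ Finset.Icc 1 (n + ℓ), if p ≤ m + ℓ then x p - x (p - 1) else 0)
      - (∑ p ∈ Finset.Icc (-n + ℓ + 1) 0, if m + ℓ < p then x p - x (p - 1) else 0) := by
  rcases le_or_gt 0 (m + ℓ) with h | h
  · have hB : (∑ p ∈ Finset.Icc (-n + ℓ + 1) 0, if m + ℓ < p then x p - x (p - 1) else 0) = 0 := by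
      apply Finset.sum_eq_zero
      intro p hp
      rw [Finset.mem_Icc] at hp
      rw [if_neg (by omega)]
    rw [hB, ← Finset.sum_filter]
    have : (Finset.Icc 1 (n + ℓ)).filter (fun p => p ≤ m + ℓ) = Finset.Icc 1 (m + ℓ) := by
      ext p; simp [Finset.mem_filter, Finset.mem_Icc]; omega
    rw [this]
    have := tele x 0 (m + ℓ) h
    simp only [zero_add] at this
    rw [this]; ring
  · have hA : (∑ p ∈ Finset.Icc 1 (n + ℓ), if p ≤ m + ℓ then x p - x (p - 1) else 0) = 0 := by
      apply Finset.sum_eq_zero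
      intro p hp
      rw [Finset.mem_Icc] at hp
      rw [if_neg (by omega)]
    rw [hA, ← Finset.sum_filter]
    have : (Finset.Icc (-n + ℓ + 1) 0).filter (fun p => m + ℓ < p) = Finset.Icc (m + ℓ + 1) 0 := by
      ext p; simp [Finset.mem_filter, Finset.mem_Icc]; omega
    rw [this, tele x (m + ℓ) 0 (by omega)]
    ring

lemma count1 (x : ℤ → ℝ) (c : ℝ) (n ℓ p : ℤ) (hp : 1 ≤ p) (h1 : ℓ ≤ n) :
    ((Finset.Icc (-n) n).filter (fun m => (c < x m - x (m - 1)) ∧ p ≤ m + ℓ)).card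
      = hingeCount x c (p - ℓ - 1) n := by
  unfold hingeCount
  congr 1
  ext m
  simp only [Finset.mem_filter, Finset.mem_Icc]
  constructor
  · rintro ⟨⟨a1, a2⟩, a3, a4⟩; exact ⟨⟨by omega, a2⟩, a3⟩
  · rintro ⟨⟨a1, a2⟩, a3⟩; exact ⟨⟨by omega, a2⟩, a3, by omega⟩

lemma count2 (x : ℤ → ℝ) (c : ℝ) (n ℓ p : ℤ) (hp : p ≤ 0) (h2 : -n ≤ ℓ) :
    ((Finset.Icc (-n) n).filter (fun m => (c < x m - x (m - 1)) ∧ m + ℓ < p)).card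
      = hingeCount x c (-n - 1) (p - ℓ - 1) := by
  unfold hingeCount
  congr 1
  ext m
  simp only [Finset.mem_filter, Finset.mem_Icc]
  constructor
  · rintro ⟨⟨a1, a2⟩, a3, a4⟩; exact ⟨⟨by omega, by omega⟩, a3⟩
  · rintro ⟨⟨a1, a2⟩, a3⟩; exact ⟨⟨by omega, by omega⟩, a3, by omega⟩

/-- Lemma 4.1: decomposition of the PRSA average in terms of increments and
hinge-point counts. -/
theorem prsa_average_decomposition
    (x : ℤ → ℝ) (c : ℝ) (n L ℓ : ℤ) (hℓ : |ℓ| ≤ L) (hL : L ≤ n)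
    (hH : 0 < hingeCount x c (-n - 1) n) :
    (∑ m ∈ Finset.Icc (-n) n, if c < x m - x (m - 1) then x (m + ℓ) else 0)
        / (hingeCount x c (-n - 1) n : ℝ)
      = x 0
        + (∑ p ∈ Finset.Icc 1 (n + ℓ), (x p - x (p - 1))
            * ((hingeCount x c (p - ℓ - 1) n : ℝ) / (hingeCount x c (-n - 1) n : ℝ)))
        - (∑ p ∈ Finset.Icc (-n + ℓ + 1) 0, (x p - x (p - 1))
            * ((hingeCount x c (-n - 1) (p - ℓ - 1) : ℝ)
                / (hingeCount x c (-n - 1) n : ℝ))) := by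
  have habs := abs_le.mp hℓ
  have h1 : ℓ ≤ n := le_trans habs.2 hL
  have h2 : -n ≤ ℓ := by omega
  set H : ℝ := (hingeCount x c (-n - 1) n : ℝ) with hHdef
  have hH' : H ≠ 0 := by
    simp only [hHdef, ne_eq, Nat.cast_eq_zero]
    omega
  rw [div_eq_iff hH']
  have expand : (x 0
        + (∑ p ∈ Finset.Icc 1 (n + ℓ), (x p - x (p - 1))
            * ((hingeCount x c (p - ℓ - 1) n : ℝ) / H))
        - (∑ p ∈ Finset.Icc (-n + ℓ + 1) 0, (x p - x (p - 1))
            * ((hingeCount x c (-n - 1) (p - ℓ - 1) : ℝ) / H))) * H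
      = x 0 * H
        + (∑ p ∈ Finset.Icc 1 (n + ℓ), (x p - x (p - 1))
            * (hingeCount x c (p - ℓ - 1) n : ℝ))
        - (∑ p ∈ Finset.Icc (-n + ℓ + 1) 0, (x p - x (p - 1))
            * (hingeCount x c (-n - 1) (p - ℓ - 1) : ℝ)) := by
    rw [sub_mul, add_mul, Finset.sum_mul, Finset.sum_mul]
    congr 1
    · congr 1
      apply Finset.sum_congr rfl
      intro p _
      field_simp
    · apply Finset.sum_congr rfl
      intro p _
      field_simp
  rw [expand]
  -- Now prove the sum identity.
  have step1 : (∑ m ∈ Finset.Icc (-n) n, if c < x m - x (m - 1) then x (m + ℓ) else 0)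
      = ∑ m ∈ Finset.Icc (-n) n,
          ((if c < x m - x (m - 1) then x 0 else 0)
           + (∑ p ∈ Finset.Icc 1 (n + ℓ),
                if (c < x m - x (m - 1)) ∧ p ≤ m + ℓ then x p - x (p - 1) else 0)
           - (∑ p ∈ Finset.Icc (-n + ℓ + 1) 0,
                if (c < x m - x (m - 1)) ∧ m + ℓ < p then x p - x (p - 1) else 0)) := by
    apply Finset.sum_congr rfl
    intro m hm
    rw [Finset.mem_Icc] at hm
    by_cases hc : c < x m - x (m - 1)
    · rw [if_pos hc, if_pos hc, point x n ℓ m hm.1 hm.2 h1 h2]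
      congr 1
      · congr 1
        apply Finset.sum_congr rfl
        intro p _
        simp [hc]
      · apply Finset.sum_congr rfl
        intro p _
        simp [hc]
    · rw [if_neg hc, if_neg hc]
      simp [hc]
  rw [step1, Finset.sum_sub_distrib, Finset.sum_add_distrib]
  congr 1
  · congr 1
    · -- constant term
      rw [← Finset.sum_filter, Finset.sum_const, nsmul_eq_mul, mul_comm]
      have hIcc : Finset.Icc (-n - 1 + 1) n = Finset.Icc (-n) n := by congr 1; ring
      rw [hHdef]
      unfold hingeCount
      rw [hIcc]
    · rw [Finset.sum_comm]
      apply Finset.sum_congr rfl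
      intro p hp
      rw [Finset.mem_Icc] at hp
      rw [← Finset.sum_filter, Finset.sum_const, nsmul_eq_mul,
        count1 x c n ℓ p hp.1 h1, mul_comm]
  · rw [Finset.sum_comm]
    apply Finset.sum_congr rfl
    intro p hp
    rw [Finset.mem_Icc] at hp
    rw [← Finset.sum_filter, Finset.sum_const, nsmul_eq_mul,
      count2 x c n ℓ p hp.2 h2, mul_comm]
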